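/- Let A be a closed densely defined operator from a Hilbert space H1 to a Hilbert space H2. Then the operators (I + A*A)^{-1} and A(I + A*A)^{-1} are everywhere defined and bounded, and (I + A*A)^{-1} is self-adjoint. -/

import Mathlib

open scoped InnerProductSpace

/-- Von Neumann's theorem: for a closed densely defined operator `A`, the operators
`(I + A*A)⁻¹` (here `R`) and `A(I + A*A)⁻¹` (here `S`) are everywhere defined and bounded,
and `(I + A*A)⁻¹` is self-adjoint. -/
theorem vonNeumann_inverse_bounded {H1 H2 : Type*}
    [NormedAddCommGroup H1] [InnerProductSpace ℂ H1] [CompleteSpace H1]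
    [NormedAddCommGroup H2] [InnerProductSpace ℂ H2] [CompleteSpace H2]
    (A : H1 →ₗ.[ℂ] H2) (hclosed : A.IsClosed) (hdense : Dense (A.domain : Set H1)) :
    ∃ (R : H1 →L[ℂ] H1) (S : H1 →L[ℂ] H2), IsSelfAdjoint R ∧
      ∀ x : H1, ∃ hx : R x ∈ A.domain, A ⟨R x, hx⟩ = S x ∧
        ∃ hy : S x ∈ A.adjoint.domain, R x + A.adjoint ⟨S x, hy⟩ = x := by
  classical
  set G := WithLp 2 (H1 × H2)
  let e : G ≃L[ℂ] H1 × H2 := WithLp.prodContinuousLinearEquiv 2 ℂ H1 H2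
  let K : Submodule ℂ G := A.graph.comap (e.toLinearEquiv : G →ₗ[ℂ] H1 × H2)
  have hKclosed : IsClosed (K : Set G) := by
    have : (K : Set G) = e ⁻¹' (A.graph : Set (H1 × H2)) := rfl
    rw [this]
    exact hclosed.preimage e.continuous
  haveI : CompleteSpace K := hKclosed.completeSpace_coe
  let P : G →L[ℂ] K := K.orthogonalProjectionOnto
  let j : H1 →L[ℂ] G :=
    (e.symm : (H1 × H2) →L[ℂ] G).comp (ContinuousLinearMap.inl ℂ H1 H2)
  let T : H1 →L[ℂ] H1 × H2 :=
    (e : G →L[ℂ] H1 × H2).comp (K.subtypeL.comp (P.comp j))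
  let R : H1 →L[ℂ] H1 := (ContinuousLinearMap.fst ℂ H1 H2).comp T
  let S : H1 →L[ℂ] H2 := (ContinuousLinearMap.snd ℂ H1 H2).comp T
  -- the key decomposition property
  have key : ∀ x : H1, ∃ hx : R x ∈ A.domain, A ⟨R x, hx⟩ = S x ∧
      ∃ hy : S x ∈ A.adjoint.domain, A.adjoint ⟨S x, hy⟩ = x - R x := by
    intro x
    have humem : (↑(P (j x)) : G) ∈ K := (P (j x)).2
    have hgraph : (R x, S x) ∈ A.graph := humem
    rw [LinearPMap.mem_graph_iff] at hgraph
    obtain ⟨y, hy1, hy2⟩ := hgraph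
    have hx : R x ∈ A.domain := by
      rw [← show (↑y : H1) = R x from hy1]; exact y.2
    refine ⟨hx, ?_, ?_⟩
    · have : (⟨R x, hx⟩ : A.domain) = y := Subtype.ext hy1.symm
      rw [this, hy2]
    · -- orthogonality part
      have horth : j x - ↑(P (j x)) ∈ Kᗮ := by
        have := K.sub_starProjection_mem_orthogonal (j x); exact this
      have hinner : ∀ p : A.domain, ⟪S x, A p⟫_ℂ = ⟪x - R x, (p : H1)⟫_ℂ := by
        intro p
        have hpK : (e.symm ((p : H1), A p) : G) ∈ K := by
          show e (e.symm ((p : H1), A p)) ∈ A.graph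
          rw [e.apply_symm_apply]
          exact A.mem_graph p
        have h0 := horth _ hpK  -- wrong direction? check
        -- horth : ∀ u ∈ K, ⟪u, j x - P (j x)⟫ = 0
        -- compute
        have h0' : ⟪(e.symm ((p : H1), A p) : G), j x - ↑(P (j x))⟫_ℂ = 0 := h0
        have hfst : (WithLp.ofLp (j x - ↑(P (j x)) : G)).1 = x - R x := rfl
        have hsnd : (WithLp.ofLp (j x - ↑(P (j x)) : G)).2 = -(S x) := by
          show (0 : H2) - S x = -(S x)
          simp
        rw [WithLp.prod_inner_apply] at h0'
        have hpf : (WithLp.ofLp (e.symm ((p : H1), A p) : G)).1 = (p : H1) := rfl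
        have hps : (WithLp.ofLp (e.symm ((p : H1), A p) : G)).2 = A p := rfl
        rw [hpf, hps, hfst, hsnd] at h0'
        rw [inner_neg_right] at h0'
        have hAp : ⟪(A p : H2), S x⟫_ℂ = ⟪(p : H1), x - R x⟫_ℂ := by
          linear_combination -h0'
        calc ⟪S x, (A p : H2)⟫_ℂ = starRingEnd ℂ ⟪(A p : H2), S x⟫_ℂ :=
              (inner_conj_symm _ _).symm
          _ = starRingEnd ℂ ⟪(p : H1), x - R x⟫_ℂ := by rw [hAp]
          _ = ⟪x - R x, (p : H1)⟫_ℂ := inner_conj_symm _ _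
      have hmem : S x ∈ A.adjoint.domain :=
        A.mem_adjoint_domain_of_exists (S x)
          ⟨x - R x, fun p => (hinner p).symm⟩
      exact ⟨hmem, LinearPMap.adjoint_apply_eq hdense ⟨S x, hmem⟩
        (fun p => (hinner p).symm)⟩
  have key' : ∀ x : H1, ∃ hx : R x ∈ A.domain, A ⟨R x, hx⟩ = S x ∧
      ∃ hy : S x ∈ A.adjoint.domain, R x + A.adjoint ⟨S x, hy⟩ = x := by
    intro x
    obtain ⟨hx, h1, hy, h2⟩ := key x
    exact ⟨hx, h1, hy, by rw [h2]; abel⟩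
  refine ⟨R, S, ?_, key'⟩
  rw [ContinuousLinearMap.isSelfAdjoint_iff_isSymmetric]
  intro x y
  obtain ⟨hx, hAx, hx', hdx⟩ := key' x
  obtain ⟨hy, hAy, hy', hdy⟩ := key' y
  have formal := A.adjoint_isFormalAdjoint hdense
  have h1 : ⟪R x, y⟫_ℂ = ⟪R x, R y⟫_ℂ + ⟪S x, S y⟫_ℂ := by
    conv_lhs => rw [← hdy]
    rw [inner_add_right]
    congr 1
    rw [← inner_conj_symm]
    rw [formal ⟨S y, hy'⟩ ⟨R x, hx⟩]
    rw [hAx, inner_conj_symm]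
  have h2 : ⟪x, R y⟫_ℂ = ⟪R x, R y⟫_ℂ + ⟪S x, S y⟫_ℂ := by
    conv_lhs => rw [← hdx]
    rw [inner_add_left]
    congr 1
    rw [formal ⟨S x, hx'⟩ ⟨R y, hy⟩, hAy]
  exact h1.trans h2.symm
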